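/- Let m ∈ ℤ_{>0}, t₁,…,t_m ∈ ℂ, μ ∈ ℂ, z₁,…,z_{2m} ∈ ℂ, set f(x) = ∏_{j=1}^m θ(x−t_j,τ), and let g : ℂ → ℂ be entire. Suppose that Wr(f,g)(x) = e^{−2πiμx}∏_{a=1}^{2m}θ(x−z_a,τ) for all x, and that f and Wr(f,g) have no common zero. Then the t_j are pairwise non-congruent modulo ℤ+τℤ, t_j − z_a ∉ ℤ+τℤ for all j, a, and (μ, t₁,…,t_m, z₁,…,z_{2m}) satisfies the Bethe ansatz equations 2πiμ + 2∑_{k≠j}ρ(t_j−t_k,τ) − ∑_{a=1}^{2m}ρ(t_j−z_a,τ) = 0 for all j = 1,…,m. -/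

import Mathlib

noncomputable section

open Complex

/-- `π` as a complex number. -/
def piC : ℂ := Real.pi

/-- The nome `q = e^{2πiτ}`. -/
def qpar (τ : ℂ) : ℂ := Complex.exp (2 * piC * Complex.I * τ)

/-- The normalized first Jacobi theta function
`θ(x,τ) = (sin(πx)/π) ∏_{j≥1} (1-q^j e^{2πix})(1-q^j e^{-2πix})(1-q^j)^{-2}`. -/
def Theta (τ x : ℂ) : ℂ :=
  (Complex.sin (piC * x) / piC) *
    ∏' j : ℕ,
      ((1 - qpar τ ^ (j + 1) * Complex.exp (2 * piC * Complex.I * x)) *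
        (1 - qpar τ ^ (j + 1) * Complex.exp (-(2 * piC * Complex.I * x))) *
        ((1 - qpar τ ^ (j + 1))⁻¹) ^ 2)

/-- `ρ(x,τ) = θ'(x,τ)/θ(x,τ)` (derivative in `x`). -/
def rho (τ x : ℂ) : ℂ := deriv (Theta τ) x / Theta τ x

/-- `σ(x,w,τ) = θ(x+w,τ)/(θ(x,τ)θ(w,τ))`. -/
def sigmaF (τ x w : ℂ) : ℂ := Theta τ (x + w) / (Theta τ x * Theta τ w)

/-- `φ(x,w,τ) = ∂_x σ(w,−x,τ)`. -/
def phiF (τ x w : ℂ) : ℂ := deriv (fun y => sigmaF τ w (-y)) x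

/-- `η(x,τ) = ρ(x,τ)² + ρ'(x,τ)`. -/
def etaF (τ x : ℂ) : ℂ := rho τ x ^ 2 + deriv (rho τ) x

/-- Membership in the lattice `ℤ + τℤ`. -/
def InLat (τ z : ℂ) : Prop := ∃ k l : ℤ, z = (k : ℂ) + (l : ℂ) * τ


/-- The Wronskian `Wr(f,g) = f·g' − f'·g`. -/
def Wron (f g : ℂ → ℂ) : ℂ → ℂ := fun x => f x * deriv g x - deriv f x * g x

/-- The Bethe ansatz equations for `(μ, t₁,…,t_m, z₁,…,z_{2m})`:
`2πiμ + 2∑_{k≠j} ρ(t_j−t_k,τ) − ∑_a ρ(t_j−z_a,τ) = 0` for `j = 1,…,m`. -/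
def BAE (τ : ℂ) (m : ℕ) (μ : ℂ) (t : Fin m → ℂ) (z : Fin (2 * m) → ℂ) : Prop :=
  ∀ j : Fin m,
    2 * piC * Complex.I * μ + 2 * ∑ k ∈ Finset.univ.erase j, rho τ (t j - t k)
      - ∑ a, rho τ (t j - z a) = 0


section AuxProofs
open Filter Metric Complex

lemma MnonnegAux {v : ℕ → ℂ} {M : ℕ → ℝ} (h : ∀ j, ‖v j - 1‖ ≤ M j) : ∀ j, 0 ≤ M j :=
  fun j => le_trans (norm_nonneg _) (h j)

lemma prod_sub_one_bound {v : ℕ → ℂ} {M : ℕ → ℝ} (h : ∀ j, ‖v j - 1‖ ≤ M j) (s : Finset ℕ) :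
    ‖(∏ j ∈ s, v j) - 1‖ ≤ Real.exp (∑ j ∈ s, M j) - 1 := by
  have hM0 := MnonnegAux h
  induction s using Finset.cons_induction with
  | empty => simp
  | cons a s ha ih =>
    rw [Finset.prod_cons, Finset.sum_cons]
    have key : v a * (∏ j ∈ s, v j) - 1 = v a * ((∏ j ∈ s, v j) - 1) + (v a - 1) := by ring
    have h1 : ‖v a‖ ≤ 1 + M a := by
      calc ‖v a‖ = ‖(v a - 1) + 1‖ := by ring_nf
      _ ≤ ‖v a - 1‖ + ‖(1 : ℂ)‖ := norm_add_le _ _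
      _ ≤ 1 + M a := by rw [norm_one]; linarith [h a]
    have hS0 : 0 ≤ ∑ j ∈ s, M j := Finset.sum_nonneg (fun j _ => hM0 j)
    calc ‖v a * (∏ j ∈ s, v j) - 1‖ ≤ ‖v a‖ * ‖(∏ j ∈ s, v j) - 1‖ + ‖v a - 1‖ := by
          rw [key]; exact le_trans (norm_add_le _ _) (by rw [norm_mul])
    _ ≤ (1 + M a) * (Real.exp (∑ j ∈ s, M j) - 1) + M a := by
        apply add_le_add _ (h a)
        exact mul_le_mul h1 ih (norm_nonneg _) (by linarith [hM0 a])
    _ ≤ Real.exp (M a + ∑ j ∈ s, M j) - 1 := by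
        rw [Real.exp_add]
        nlinarith [Real.add_one_le_exp (M a), Real.one_le_exp hS0, Real.exp_pos (∑ j ∈ s, M j),
          Real.exp_pos (M a)]

lemma prod_norm_bound {v : ℕ → ℂ} {M : ℕ → ℝ} (h : ∀ j, ‖v j - 1‖ ≤ M j) (s : Finset ℕ) :
    ‖∏ j ∈ s, v j‖ ≤ Real.exp (∑ j ∈ s, M j) := by
  calc ‖∏ j ∈ s, v j‖ = ‖((∏ j ∈ s, v j) - 1) + 1‖ := by ring_nf
  _ ≤ ‖(∏ j ∈ s, v j) - 1‖ + ‖(1:ℂ)‖ := norm_add_le _ _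
  _ ≤ (Real.exp (∑ j ∈ s, M j) - 1) + 1 := by
      rw [norm_one]; exact add_le_add_left (prod_sub_one_bound h s) 1
  _ = Real.exp (∑ j ∈ s, M j) := by ring

lemma prod_diff_bound {v : ℕ → ℂ} {M : ℕ → ℝ} (hM : Summable M) (h : ∀ j, ‖v j - 1‖ ≤ M j)
    {s t : Finset ℕ} (hst : s ⊆ t) :
    ‖(∏ j ∈ t, v j) - ∏ j ∈ s, v j‖
      ≤ Real.exp (∑' j, M j) * (Real.exp (∑ j ∈ t \ s, M j) - 1) := by
  have hM0 := MnonnegAux h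
  have e1 : (∏ j ∈ t, v j) - ∏ j ∈ s, v j
      = (∏ j ∈ s, v j) * ((∏ j ∈ t \ s, v j) - 1) := by
    rw [mul_sub, mul_one, mul_comm, Finset.prod_sdiff hst]
  rw [e1, norm_mul]
  have hb1 : ‖∏ j ∈ s, v j‖ ≤ Real.exp (∑' j, M j) :=
    le_trans (prod_norm_bound h s)
      (Real.exp_le_exp.mpr (Summable.sum_le_tsum s (fun j _ => hM0 j) hM))
  have hb2 := prod_sub_one_bound h (t \ s)
  have h2 : (0:ℝ) ≤ Real.exp (∑ j ∈ t \ s, M j) - 1 := by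
    have := Real.one_le_exp (Finset.sum_nonneg (fun j _ => hM0 j) : (0:ℝ) ≤ ∑ j ∈ t \ s, M j)
    linarith
  exact mul_le_mul hb1 hb2 (norm_nonneg _) (Real.exp_pos _).le

lemma exp_tail_small (C : ℝ) {ε : ℝ} (hε : 0 < ε) :
    ∃ δ > 0, ∀ η : ℝ, 0 ≤ η → η ≤ δ → Real.exp C * (Real.exp η - 1) < ε := by
  have hc : ContinuousAt (fun η : ℝ => Real.exp C * (Real.exp η - 1)) 0 := by fun_prop
  have h0 : (fun η : ℝ => Real.exp C * (Real.exp η - 1)) 0 = 0 := by simp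
  have hev : ∀ᶠ η in nhds (0:ℝ), Real.exp C * (Real.exp η - 1) < ε := by
    have h2 := hc.tendsto
    simp only [Real.exp_zero, sub_self, mul_zero] at h2
    exact h2.eventually_lt_const hε
  obtain ⟨δ, hδ, hd⟩ := Metric.eventually_nhds_iff.mp hev
  refine ⟨δ/2, by linarith, fun η h0η hηδ => hd ?_⟩
  rw [Real.dist_eq, sub_zero, _root_.abs_of_nonneg h0η]; linarith

lemma multipliable_of_bound {v : ℕ → ℂ} {M : ℕ → ℝ} (hM : Summable M)
    (h : ∀ j, ‖v j - 1‖ ≤ M j) : Multipliable v := by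
  have hM0 := MnonnegAux h
  have hc : CauchySeq (fun s : Finset ℕ => ∏ j ∈ s, v j) := by
    rw [Metric.cauchySeq_iff']
    intro ε hε
    obtain ⟨δ, hδ, hδε⟩ := exp_tail_small (∑' j, M j) hε
    obtain ⟨s₀, hs₀⟩ := hM.vanishing (Metric.ball_mem_nhds (0:ℝ) hδ)
    refine ⟨s₀, fun s hs => ?_⟩
    rw [dist_eq_norm]
    have hd : Disjoint (s \ s₀) s₀ := Finset.sdiff_disjoint
    have htail : ∑ j ∈ s \ s₀, M j < δ := by
      have := hs₀ _ hd
      rw [Metric.mem_ball, Real.dist_eq, sub_zero] at this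
      exact lt_of_abs_lt this
    calc ‖(∏ j ∈ s, v j) - ∏ j ∈ s₀, v j‖
        ≤ Real.exp (∑' j, M j) * (Real.exp (∑ j ∈ s \ s₀, M j) - 1) :=
          prod_diff_bound hM h hs
    _ < ε := hδε _ (Finset.sum_nonneg fun j _ => hM0 j) htail.le
  obtain ⟨a, ha⟩ := cauchySeq_tendsto_of_complete hc
  exact ⟨a, ha⟩

lemma tendstoUniformlyOn_prod {v : ℕ → ℂ → ℂ} {M : ℕ → ℝ} (hM : Summable M) (K : Set ℂ)
    (h : ∀ j, ∀ x ∈ K, ‖v j x - 1‖ ≤ M j) :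
    TendstoUniformlyOn (fun (s : Finset ℕ) x => ∏ j ∈ s, v j x)
      (fun x => ∏' j, v j x) atTop K := by
  rw [Metric.tendstoUniformlyOn_iff]
  intro ε hε
  obtain ⟨δ, hδ, hδε⟩ := exp_tail_small (∑' j, M j) (half_pos hε)
  obtain ⟨s₀, hs₀⟩ := hM.vanishing (Metric.ball_mem_nhds (0:ℝ) hδ)
  filter_upwards [Filter.eventually_ge_atTop s₀] with s hs x hx
  have hx' : ∀ j, ‖v j x - 1‖ ≤ M j := fun j => h j x hx
  have hmul : Multipliable (fun j => v j x) := multipliable_of_bound hM hx'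
  have hlim : Tendsto (fun t : Finset ℕ => ∏ j ∈ t, v j x) atTop (nhds (∏' j, v j x)) :=
    hmul.hasProd
  have hball : ∀ᶠ t : Finset ℕ in atTop, (∏ j ∈ t, v j x) ∈
      {y : ℂ | ‖y - ∏ j ∈ s, v j x‖ ≤ ε/2} := by
    filter_upwards [Filter.eventually_ge_atTop s] with t ht
    have hd : Disjoint (t \ s) s₀ := Finset.disjoint_left.mpr
      (fun a hat has => (Finset.mem_sdiff.mp hat).2 (hs has))
    have htail : ∑ j ∈ t \ s, M j < δ := by
      have := hs₀ _ hd
      rw [Metric.mem_ball, Real.dist_eq, sub_zero] at this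
      exact lt_of_abs_lt this
    exact le_of_lt (lt_of_le_of_lt (prod_diff_bound hM hx' ht)
      (hδε _ (Finset.sum_nonneg fun j _ => MnonnegAux hx' j) htail.le))
  have hcl : IsClosed {y : ℂ | ‖y - ∏ j ∈ s, v j x‖ ≤ ε/2} :=
    isClosed_le (by fun_prop) continuous_const
  have hmem : (∏' j, v j x) ∈ {y : ℂ | ‖y - ∏ j ∈ s, v j x‖ ≤ ε/2} :=
    hcl.mem_of_tendsto hlim hball
  rw [dist_eq_norm]
  exact lt_of_le_of_lt hmem (by linarith)

lemma differentiable_tprod_of_bound {v : ℕ → ℂ → ℂ}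
    (hd : ∀ j, Differentiable ℂ (v j)) {x₀ : ℂ}
    (hb : ∀ R : ℝ, 0 < R → ∃ M : ℕ → ℝ, Summable M ∧
        ∀ j, ∀ x ∈ Metric.closedBall (0:ℂ) R, ‖v j x - 1‖ ≤ M j) :
    DifferentiableAt ℂ (fun x => ∏' j, v j x) x₀ := by
  set R := ‖x₀‖ + 1 with hR
  have hR0 : 0 < R := by positivity
  obtain ⟨M, hM, hMb⟩ := hb R hR0
  have hu : TendstoUniformlyOn (fun (s : Finset ℕ) x => ∏ j ∈ s, v j x)
      (fun x => ∏' j, v j x) atTop (Metric.ball (0:ℂ) R) :=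
    (tendstoUniformlyOn_prod hM _ hMb).mono Metric.ball_subset_closedBall
  have hdo : DifferentiableOn ℂ (fun x => ∏' j, v j x) (Metric.ball (0:ℂ) R) := by
    apply hu.tendstoLocallyUniformlyOn.differentiableOn ?_ Metric.isOpen_ball
    filter_upwards with s
    exact (Differentiable.differentiableOn (by fun_prop))
  exact hdo.differentiableAt (Metric.isOpen_ball.mem_nhds (by rw [Metric.mem_ball, dist_zero_right]; exact lt_add_one _))


def term (τ x : ℂ) (j : ℕ) : ℂ :=
  (1 - qpar τ ^ (j + 1) * Complex.exp (2 * piC * Complex.I * x)) *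
    (1 - qpar τ ^ (j + 1) * Complex.exp (-(2 * piC * Complex.I * x))) *
    ((1 - qpar τ ^ (j + 1))⁻¹) ^ 2

lemma Theta_eq (τ x : ℂ) : Theta τ x = (Complex.sin (piC * x) / piC) * ∏' j, term τ x j := rfl

lemma norm_qpar (τ : ℂ) : ‖qpar τ‖ = Real.exp (-(2 * Real.pi * τ.im)) := by
  rw [qpar, Complex.norm_exp]
  congr 1
  simp [piC, Complex.mul_re, Complex.mul_im]

lemma norm_qpar_lt_one {τ : ℂ} (hτ : 0 < τ.im) : ‖qpar τ‖ < 1 := by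
  rw [norm_qpar]
  apply Real.exp_lt_one_iff.mpr
  have := Real.pi_pos
  nlinarith

variable {τ : ℂ}

lemma term_differentiable (τ : ℂ) (j : ℕ) : Differentiable ℂ (fun x => term τ x j) := by
  unfold term; fun_prop

lemma norm_exp_le {R : ℝ} {x : ℂ} (hx : x ∈ Metric.closedBall (0:ℂ) R) :
    ‖Complex.exp (2 * piC * Complex.I * x)‖ ≤ Real.exp (2 * Real.pi * R) ∧
    ‖Complex.exp (-(2 * piC * Complex.I * x))‖ ≤ Real.exp (2 * Real.pi * R) := by
  rw [Metric.mem_closedBall, dist_zero_right] at hx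
  have him : |x.im| ≤ R := le_trans (Complex.abs_im_le_norm x) hx
  have hre : (2 * piC * Complex.I * x).re = -(2 * Real.pi * x.im) := by
    simp [piC, Complex.mul_re, Complex.mul_im]
  have hpi := Real.pi_pos
  constructor
  · rw [Complex.norm_exp, hre]
    apply Real.exp_le_exp.mpr
    nlinarith [abs_le.mp him]
  · rw [Complex.norm_exp, Complex.neg_re, hre, neg_neg]
    apply Real.exp_le_exp.mpr
    nlinarith [abs_le.mp him]

lemma term_sub_one (hτ : 0 < τ.im) (R : ℝ) :
    ∀ j, ∀ x ∈ Metric.closedBall (0:ℂ) R,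
      ‖term τ x j - 1‖ ≤ ((1 - ‖qpar τ‖)⁻¹)^2 * (2 + 2 * Real.exp (2 * Real.pi * R)) *
        (‖qpar τ‖ * ‖qpar τ‖^j) := by
  intro j x hx
  set r := ‖qpar τ‖ with hr
  have hr0 : 0 ≤ r := norm_nonneg _
  have hr1 : r < 1 := norm_qpar_lt_one hτ
  set a := qpar τ ^ (j+1) with ha
  set E := Complex.exp (2 * piC * Complex.I * x) with hE
  set E' := Complex.exp (-(2 * piC * Complex.I * x)) with hE'
  have hnorma : ‖a‖ = r^(j+1) := by rw [ha, norm_pow]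
  have hra : ‖a‖ ≤ r := by
    rw [hnorma]
    calc r^(j+1) ≤ r^1 := pow_le_pow_of_le_one hr0 hr1.le (by omega)
    _ = r := pow_one r
  have h1a : 1 - r ≤ ‖(1:ℂ) - a‖ := by
    have h := norm_sub_norm_le (1:ℂ) a
    rw [norm_one] at h
    linarith
  have h1ane : (1:ℂ) - a ≠ 0 := by
    intro h
    rw [h, norm_zero] at h1a; linarith
  have hEE : E * E' = 1 := by
    rw [hE, hE', ← Complex.exp_add, add_neg_cancel, Complex.exp_zero]
  have key : term τ x j = 1 + ((1 - a)⁻¹)^2 * (a * (2 - E - E')) := by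
    rw [term, ← ha, ← hE, ← hE']
    field_simp
    linear_combination (a^2 : ℂ) * hEE
  rw [key]
  simp only [add_sub_cancel_left]
  rw [norm_mul, norm_pow, norm_inv, norm_mul]
  set B := Real.exp (2 * Real.pi * R) with hB
  have hB1 : 0 < B := Real.exp_pos _
  obtain ⟨hEb, hE'b⟩ := norm_exp_le (R := R) (x := x) hx
  have h2EE : ‖(2:ℂ) - E - E'‖ ≤ 2 + 2 * B := by
    calc ‖(2:ℂ) - E - E'‖ ≤ ‖(2:ℂ) - E‖ + ‖E'‖ := norm_sub_le _ _
    _ ≤ ‖(2:ℂ)‖ + ‖E‖ + ‖E'‖ := by linarith [norm_sub_le (2:ℂ) E]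
    _ ≤ 2 + 2 * B := by
        simp only [Complex.norm_ofNat]  -- ‖(2:ℂ)‖ = 2
        linarith
  have hinv : ‖(1:ℂ) - a‖⁻¹ ≤ (1 - r)⁻¹ := inv_anti₀ (by linarith) h1a
  have h1r : 0 < (1 - r)⁻¹ := inv_pos.mpr (by linarith)
  calc ‖(1:ℂ)-a‖⁻¹^2 * (‖a‖ * ‖(2:ℂ) - E - E'‖)
      ≤ ((1-r)⁻¹)^2 * (r^(j+1) * (2 + 2*B)) := by
        apply mul_le_mul
        · exact pow_le_pow_left₀ (inv_nonneg.mpr (norm_nonneg _)) hinv 2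
        · exact mul_le_mul (le_of_eq hnorma) h2EE (norm_nonneg _) (by positivity)
        · positivity
        · positivity
  _ = ((1-r)⁻¹)^2 * (2 + 2*B) * (r * r^j) := by ring

lemma Theta_differentiable (hτ : 0 < τ.im) : Differentiable ℂ (Theta τ) := by
  have hP : Differentiable ℂ (fun x => ∏' j, term τ x j) := by
    intro x₀
    apply differentiable_tprod_of_bound (fun j => term_differentiable τ j)
    intro R hR0
    refine ⟨_, ?_, term_sub_one hτ R⟩
    apply Summable.mul_left
    exact (summable_geometric_of_lt_one (norm_nonneg _) (norm_qpar_lt_one hτ)).mul_left _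
  have : Theta τ = fun x => (Complex.sin (piC * x) / piC) * ∏' j, term τ x j := rfl
  rw [this]
  fun_prop

lemma tprod_eq_zero_of_factor {f : ℕ → ℂ} (i : ℕ) (h : f i = 0) : ∏' n, f n = 0 := by
  have hp : HasProd f 0 := by
    rw [HasProd]
    apply Filter.Tendsto.congr' _ tendsto_const_nhds
    filter_upwards [Filter.eventually_ge_atTop {i}] with s hs
    exact (Finset.prod_eq_zero (hs (Finset.mem_singleton_self i)) h).symm
  exact hp.tprod_eq

lemma Theta_zero (τ : ℂ) : Theta τ 0 = 0 := by
  rw [Theta_eq, mul_zero, Complex.sin_zero, zero_div, zero_mul]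

lemma Theta_odd (τ x : ℂ) : Theta τ (-x) = -Theta τ x := by
  rw [Theta_eq, Theta_eq]
  have hsin : Complex.sin (piC * -x) = -Complex.sin (piC * x) := by
    rw [mul_neg, Complex.sin_neg]
  rw [hsin]
  have hprod : ∏' j, term τ (-x) j = ∏' j, term τ x j := by
    apply tprod_congr
    intro j
    unfold term
    rw [mul_neg, neg_neg]
    ring
  rw [hprod]
  ring

lemma Theta_lattice (τ : ℂ) (k l : ℤ) : Theta τ ((k : ℂ) + (l : ℂ) * τ) = 0 := by
  set x : ℂ := (k : ℂ) + (l : ℂ) * τ with hx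
  rcases lt_trichotomy l 0 with hl | hl | hl
  · -- l < 0 : first factor of term (−l).toNat − 1 vanishes
    set n : ℕ := (-l).toNat with hn
    have hn1 : 1 ≤ n := by omega
    have hnl : (n : ℂ) = -(l : ℂ) := by
      have : ((-l).toNat : ℤ) = -l := Int.toNat_of_nonneg (by omega)
      exact_mod_cast congrArg (Int.cast : ℤ → ℂ) this
    have hfac : qpar τ ^ ((n-1) + 1) * Complex.exp (2 * piC * Complex.I * x) = 1 := by
      have hn' : (n - 1) + 1 = n := by omega
      rw [hn', qpar, ← Complex.exp_nat_mul, ← Complex.exp_add]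
      have harg : (n:ℂ) * (2 * piC * Complex.I * τ) + 2 * piC * Complex.I * x
          = (k : ℂ) * (2 * (Real.pi:ℂ) * Complex.I) := by
        rw [hx]
        simp only [piC]
        linear_combination (2 * (Real.pi:ℂ) * Complex.I * τ) * hnl
      rw [harg]
      exact_mod_cast Complex.exp_int_mul_two_pi_mul_I k
    have hterm : term τ x (n-1) = 0 := by
      unfold term
      rw [hfac]
      simp
    rw [Theta_eq, tprod_eq_zero_of_factor (n-1) hterm, mul_zero]
  · subst hl
    rw [Theta_eq]
    have : Complex.sin (piC * ((k:ℂ) + 0 * τ)) = 0 := by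
      rw [zero_mul, add_zero, piC, mul_comm]
      exact Complex.sin_int_mul_pi k
    simp only [hx] at this ⊢
    rw [Int.cast_zero, this, zero_div, zero_mul]
  · -- l > 0 : second factor of term l.toNat − 1 vanishes
    set n : ℕ := l.toNat with hn
    have hn1 : 1 ≤ n := by omega
    have hnl : (n : ℂ) = (l : ℂ) := by
      have : (l.toNat : ℤ) = l := Int.toNat_of_nonneg (by omega)
      exact_mod_cast congrArg (Int.cast : ℤ → ℂ) this
    have hfac : qpar τ ^ ((n-1) + 1) * Complex.exp (-(2 * piC * Complex.I * x)) = 1 := by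
      have hn' : (n - 1) + 1 = n := by omega
      rw [hn', qpar, ← Complex.exp_nat_mul, ← Complex.exp_add]
      have harg : (n:ℂ) * (2 * piC * Complex.I * τ) + -(2 * piC * Complex.I * x)
          = (-k : ℂ) * (2 * (Real.pi:ℂ) * Complex.I) := by
        rw [hx]
        simp only [piC]
        linear_combination (2 * (Real.pi:ℂ) * Complex.I * τ) * hnl
      rw [harg]
      have := Complex.exp_int_mul_two_pi_mul_I (-k)
      simpa using this
    have hterm : term τ x (n-1) = 0 := by
      unfold term
      rw [hfac]
      simp
    rw [Theta_eq, tprod_eq_zero_of_factor (n-1) hterm, mul_zero]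

lemma deriv_Theta_even (τ : ℂ) (x : ℂ) : deriv (Theta τ) (-x) = deriv (Theta τ) x := by
  have h1 : (fun y => Theta τ (-y)) = fun y => -Theta τ y := funext (Theta_odd τ)
  have e1 : deriv (fun y => Theta τ (-y)) x = -deriv (Theta τ) (-x) := deriv_comp_neg _ _
  rw [h1] at e1
  rw [deriv.fun_neg] at e1
  exact neg_injective e1.symm

lemma deriv2_Theta_zero (τ : ℂ) : deriv (deriv (Theta τ)) 0 = 0 := by
  have h1 : (fun y => deriv (Theta τ) (-y)) = deriv (Theta τ) := funext (deriv_Theta_even τ)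
  have e1 : deriv (fun y => deriv (Theta τ) (-y)) 0 = -deriv (deriv (Theta τ)) (-0) :=
    deriv_comp_neg _ _
  rw [h1, neg_zero] at e1
  have : deriv (deriv (Theta τ)) 0 = -deriv (deriv (Theta τ)) 0 := e1
  exact CharZero.eq_neg_self_iff.mp this

lemma deriv_differentiable {f : ℂ → ℂ} (h : Differentiable ℂ f) : Differentiable ℂ (deriv f) :=
  analyticOnNhd_univ_iff_differentiable.mp (analyticOnNhd_univ_iff_differentiable.mpr h).deriv

lemma diff_finprod {ι : Type*} (s : Finset ι) (u : ι → ℂ → ℂ)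
    (h : ∀ i, Differentiable ℂ (u i)) : Differentiable ℂ (fun x => ∏ i ∈ s, u i x) := by
  fun_prop


end AuxProofs

/-- if `Wr(∏_j θ(x−t_j), g) = e^{−2πiμx}∏_a θ(x−z_a)` and
`f = ∏_j θ(x−t_j)` has no common zero with the Wronskian, then the `t_j` are pairwise
non-congruent mod `ℤ+τℤ`, `t_j − z_a ∉ ℤ+τℤ`, and the Bethe ansatz equations hold. -/
theorem wronskian_eq_implies_BAE (τ : ℂ) (hτ : 0 < τ.im) (m : ℕ) (hm : 0 < m) (μ : ℂ)
    (t : Fin m → ℂ) (z : Fin (2 * m) → ℂ) (g : ℂ → ℂ) (hg : Differentiable ℂ g)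
    (hW : ∀ x : ℂ, Wron (fun y => ∏ j, Theta τ (y - t j)) g x
        = Complex.exp (-(2 * piC * Complex.I * μ * x)) * ∏ a, Theta τ (x - z a))
    (hcz : ∀ x : ℂ, (∏ j, Theta τ (x - t j)) = 0 →
        Wron (fun y => ∏ j, Theta τ (y - t j)) g x ≠ 0) :
    (∀ j k, j ≠ k → ¬ InLat τ (t j - t k)) ∧
    (∀ j a, ¬ InLat τ (t j - z a)) ∧
    BAE τ m μ t z := by
  have hθd : Differentiable ℂ (Theta τ) := Theta_differentiable hτ
  have hDd : Differentiable ℂ (deriv (Theta τ)) := deriv_differentiable hθd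
  have hGd : Differentiable ℂ (deriv g) := deriv_differentiable hg
  set f : ℂ → ℂ := (fun y => ∏ j, Theta τ (y - t j)) with hfdef
  have hθsub : ∀ c : ℂ, Differentiable ℂ (fun x => Theta τ (x - c)) :=
    fun c => hθd.comp (differentiable_id.sub_const c)
  have hDsub : ∀ c : ℂ, Differentiable ℂ (fun x => deriv (Theta τ) (x - c)) :=
    fun c => hDd.comp (differentiable_id.sub_const c)
  have hfd : Differentiable ℂ f := diff_finprod _ _ (fun i => hθsub (t i))
  -- at each j : split f and compute derivatives
  have main : ∀ j : Fin m,
      (f (t j) = 0) ∧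
      (deriv f (t j) = deriv (Theta τ) 0 * ∏ k ∈ Finset.univ.erase j, Theta τ (t j - t k)) ∧
      (deriv (deriv f) (t j) = 2 * deriv (Theta τ) 0 *
        deriv (fun x => ∏ k ∈ Finset.univ.erase j, Theta τ (x - t k)) (t j)) := by
    intro j
    set h : ℂ → ℂ := fun x => ∏ k ∈ Finset.univ.erase j, Theta τ (x - t k) with hh
    have hhd : Differentiable ℂ h := diff_finprod _ _ (fun i => hθsub (t i))
    have hHd : Differentiable ℂ (deriv h) := deriv_differentiable hhd
    have hsplit : f = fun x => Theta τ (x - t j) * h x := by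
      funext x
      exact (Finset.mul_prod_erase _ _ (Finset.mem_univ j)).symm
    have hf0 : f (t j) = 0 := by
      rw [hsplit]; simp [sub_self, Theta_zero]
    have hder : ∀ x, deriv f x
        = deriv (Theta τ) (x - t j) * h x + Theta τ (x - t j) * deriv h x := by
      intro x
      rw [hsplit, deriv_fun_mul ((hθsub (t j)) x) (hhd x), deriv_comp_sub_const]
    have hder1 : deriv f (t j) = deriv (Theta τ) 0 * h (t j) := by
      rw [hder (t j), sub_self, Theta_zero, zero_mul, add_zero]
    have hderfun : deriv f
        = fun x => deriv (Theta τ) (x - t j) * h x + Theta τ (x - t j) * deriv h x :=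
      funext hder
    have hder2 : deriv (deriv f) (t j) = 2 * deriv (Theta τ) 0 * deriv h (t j) := by
      rw [hderfun]
      rw [deriv_fun_add (((hDsub (t j)).fun_mul hhd) (t j)) (((hθsub (t j)).fun_mul hHd) (t j)),
        deriv_fun_mul ((hDsub (t j)) (t j)) (hhd (t j)),
        deriv_fun_mul ((hθsub (t j)) (t j)) (hHd (t j)),
        deriv_comp_sub_const, deriv_comp_sub_const, sub_self, Theta_zero,
        deriv2_Theta_zero]
      ring
    exact ⟨hf0, hder1, hder2⟩
  -- Part 1
  have part1 : ∀ j k, j ≠ k → ¬ InLat τ (t j - t k) := by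
    intro j k hjk ⟨a, b, hab⟩
    obtain ⟨hf0, hder1, -⟩ := main j
    apply hcz (t j) hf0
    have hhz : (∏ k' ∈ Finset.univ.erase j, Theta τ (t j - t k')) = 0 := by
      apply Finset.prod_eq_zero (Finset.mem_erase.mpr ⟨hjk.symm, Finset.mem_univ k⟩)
      rw [hab]; exact Theta_lattice τ a b
    have hdf0 : deriv f (t j) = 0 := by rw [hder1, hhz, mul_zero]
    show f (t j) * deriv g (t j) - deriv f (t j) * g (t j) = 0
    rw [hf0, hdf0, zero_mul, zero_mul, sub_zero]
  -- Part 2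
  have part2 : ∀ j a, ¬ InLat τ (t j - z a) := by
    intro j a ⟨p, q, hpq⟩
    obtain ⟨hf0, -, -⟩ := main j
    apply hcz (t j) hf0
    rw [hW (t j)]
    have : (∏ b, Theta τ (t j - z b)) = 0 := by
      apply Finset.prod_eq_zero (Finset.mem_univ a)
      rw [hpq]; exact Theta_lattice τ p q
    rw [this, mul_zero]
  refine ⟨part1, part2, ?_⟩
  -- Part 3: Bethe ansatz equations
  intro j
  obtain ⟨hf0, hder1, hder2⟩ := main j
  set ν : ℂ := 2 * piC * Complex.I * μ with hν
  set h : ℂ → ℂ := fun x => ∏ k ∈ Finset.univ.erase j, Theta τ (x - t k) with hh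
  set Z : ℂ → ℂ := fun x => ∏ a, Theta τ (x - z a) with hZ
  have hhd : Differentiable ℂ h := diff_finprod _ _ (fun i => hθsub (t i))
  have hZd : Differentiable ℂ Z := diff_finprod _ _ (fun i => hθsub (z i))
  set D0 : ℂ := deriv (Theta τ) 0 with hD0
  set E0 : ℂ := Complex.exp (-(ν * t j)) with hE0
  have hE0ne : E0 ≠ 0 := Complex.exp_ne_zero _
  -- W (t j) two ways
  have hWne : Wron f g (t j) ≠ 0 := hcz (t j) hf0
  have hWval : Wron f g (t j) = -(D0 * h (t j) * g (t j)) := by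
    show f (t j) * deriv g (t j) - deriv f (t j) * g (t j) = _
    rw [hf0, hder1, zero_mul, zero_sub]
  have hi : -(D0 * h (t j) * g (t j)) = E0 * Z (t j) := by
    rw [← hWval, hW (t j)]
  -- nonvanishing
  have hcne : D0 * h (t j) * g (t j) ≠ 0 := by
    intro hc; rw [hWval, hc, neg_zero] at hWne; exact hWne rfl
  have hD0ne : D0 ≠ 0 := fun hc => hcne (by rw [hc, zero_mul, zero_mul])
  have hhne : h (t j) ≠ 0 := fun hc => hcne (by rw [hc, mul_zero, zero_mul])
  have hgne : g (t j) ≠ 0 := fun hc => hcne (by rw [hc, mul_zero])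
  have hZne : Z (t j) ≠ 0 := by
    intro hc
    rw [hW (t j)] at hWne
    exact hWne (mul_eq_zero_of_right _ hc)
  -- log derivatives
  set S1 : ℂ := ∑ k ∈ Finset.univ.erase j, rho τ (t j - t k) with hS1
  set S2 : ℂ := ∑ a, rho τ (t j - z a) with hS2
  have hlog : ∀ (ι : Type) (s : Finset ι) (w : ι → ℂ) (x : ℂ),
      (∀ i ∈ s, Theta τ (x - w i) ≠ 0) →
      logDeriv (fun y => ∏ i ∈ s, Theta τ (y - w i)) x = ∑ i ∈ s, rho τ (x - w i) := by
    intro ι s w x hne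
    rw [logDeriv_prod (s := s) (f := fun i => fun y => Theta τ (y - w i)) (x := x) hne
      (fun i _ => (hθsub (w i)) x)]
    apply Finset.sum_congr rfl
    intro i _
    rw [logDeriv_apply, deriv_comp_sub_const, rho]
  have hhfac : ∀ k ∈ Finset.univ.erase j, Theta τ (t j - t k) ≠ 0 :=
    fun k hk => Finset.prod_ne_zero_iff.mp hhne k hk
  have hZfac : ∀ a ∈ Finset.univ, Theta τ (t j - z a) ≠ 0 :=
    fun a ha => Finset.prod_ne_zero_iff.mp hZne a ha
  have hhlog : deriv h (t j) = S1 * h (t j) := by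
    have := hlog (Fin m) (Finset.univ.erase j) t (t j) hhfac
    rw [logDeriv_apply] at this
    rw [← hh, ← hS1] at this
    field_simp at this
    exact (div_eq_iff hhne).mp this
  have hZlog : deriv Z (t j) = S2 * Z (t j) := by
    have := hlog (Fin (2 * m)) Finset.univ z (t j) hZfac
    rw [logDeriv_apply] at this
    rw [← hZ, ← hS2] at this
    field_simp at this
    exact (div_eq_iff hZne).mp this
  -- derivative of W two ways
  have hdW1 : deriv (Wron f g) (t j) = -(2 * D0 * (S1 * h (t j)) * g (t j)) := by
    have hWeq : Wron f g = fun x => f x * deriv g x - deriv f x * g x := rfl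
    rw [hWeq, deriv_fun_sub ((hfd.fun_mul hGd) (t j)) (((deriv_differentiable hfd).fun_mul hg) (t j)),
      deriv_fun_mul (hfd (t j)) (hGd (t j)),
      deriv_fun_mul ((deriv_differentiable hfd) (t j)) (hg (t j)),
      hf0, hder2, hder1, hhlog]
    ring
  have hdW2 : deriv (Wron f g) (t j) = -ν * E0 * Z (t j) + E0 * (S2 * Z (t j)) := by
    have hWeq2 : Wron f g = fun x => Complex.exp (-(ν * x)) * Z x := funext hW
    have hExp : HasDerivAt (fun x : ℂ => Complex.exp (-(ν * x)))
        (Complex.exp (-(ν * t j)) * -(ν * 1)) (t j) :=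
      (((hasDerivAt_id (t j)).const_mul ν).neg).cexp
    rw [hWeq2, deriv_fun_mul hExp.differentiableAt (hZd (t j)), hExp.deriv, hZlog, ← hE0]
    ring
  -- final algebra
  show ν + 2 * S1 - S2 = 0
  have hcancel : (ν + 2 * S1 - S2) * (D0 * h (t j) * g (t j)) = 0 := by
    have hii : -(2 * D0 * (S1 * h (t j)) * g (t j))
        = -ν * E0 * Z (t j) + E0 * (S2 * Z (t j)) := by rw [← hdW1, hdW2]
    linear_combination (S2 - ν) * hi - hii
  rcases mul_eq_zero.mp hcancel with hc | hc
  · exact hc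
  · exact absurd hc hcne

end
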